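/- arXiv:1804.09878 — 2 statements merged into one kernel-verified Lean document; each statement's English description precedes it below -/
import Mathlib

section
/- For every c ∈ L^×, the dual lattice of O_L with respect to the scaled trace pairing equals c^{-1}·O_L; that is, {x ∈ L : Tr_{L/F}(c·x·y) ∈ O_F for all y ∈ O_L} = c^{-1}·O_L. (In particular, taking c = 1, the trace-form dual of O_L is O_L itself.) -/
/-- An element `ϖ` of a field `K` is a uniformizer of a subring `O` (thought of
as a valuation ring of `K`) if `ϖ` is a nonzero nonunit of `O` generating the
maximal ideal of `O`, i.e. every nonunit of `O` is divisible by `ϖ` in `O`. -/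
def IsUniformizer {K : Type*} [Field K] (O : Subring K) (ϖ : K) : Prop :=
  ϖ ∈ O ∧ ϖ ≠ 0 ∧ ϖ⁻¹ ∉ O ∧ ∀ x ∈ O, (x = 0 ∨ x⁻¹ ∉ O) → x / ϖ ∈ O

section Helpers

theorem IsLocalRing.of_unif {R : Type*} [CommRing R] [Nontrivial R]
    {π : R} (hπu : ¬ IsUnit π) (hdvd : ∀ x : R, ¬ IsUnit x → π ∣ x) :
    IsLocalRing R :=
  IsLocalRing.of_nonunits_add fun a b ha hb => by
    rw [mem_nonunits_iff] at ha hb ⊢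
    obtain ⟨a', rfl⟩ := hdvd a ha
    obtain ⟨b', rfl⟩ := hdvd b hb
    rw [← mul_add]
    exact fun hu => hπu (isUnit_of_mul_isUnit_left hu)

theorem maximalIdeal_eq_span_of_unif {R : Type*} [CommRing R] [IsLocalRing R]
    {π : R} (hπu : ¬ IsUnit π) (hdvd : ∀ x : R, ¬ IsUnit x → π ∣ x) :
    IsLocalRing.maximalIdeal R = Ideal.span {π} := by
  ext x
  rw [IsLocalRing.mem_maximalIdeal, mem_nonunits_iff, Ideal.mem_span_singleton]
  constructor
  · exact hdvd x
  · rintro ⟨c, rfl⟩ hu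
    exact hπu (isUnit_of_mul_isUnit_left hu)

theorem Subalgebra.isUnit_iff_field {R K : Type*} [CommRing R] [Field K] [Algebra R K]
    {S : Subalgebra R K} (x : ↥S) : IsUnit x ↔ ((x : K) ≠ 0 ∧ (x : K)⁻¹ ∈ S) := by
  constructor
  · rintro ⟨u, rfl⟩
    have h1 : ((u.val : ↥S) : K) * ((u.inv : ↥S) : K) = 1 := by
      rw [← Subalgebra.coe_mul, u.val_inv, Subalgebra.coe_one]
    refine ⟨left_ne_zero_of_mul_eq_one h1, ?_⟩
    rw [inv_eq_of_mul_eq_one_right h1]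
    exact (u.inv).2
  · rintro ⟨h0, hmem⟩
    refine IsUnit.of_mul_eq_one (a := x) ⟨(x : K)⁻¹, hmem⟩ (Subtype.ext ?_)
    simpa using mul_inv_cancel₀ h0

theorem finite_of_fg_p_torsion (p : ℕ) [Fact p.Prime] (M : Type*) [AddCommGroup M]
    [Module ℤ_[p] M] [Module.Finite ℤ_[p] M] (hp : ∀ m : M, ((p : ℕ) : ℤ_[p]) • m = 0) :
    Finite M := by
  obtain ⟨n, g, hg⟩ := Module.Finite.exists_fin (R := ℤ_[p]) (M := M)
  have hsurj : Function.Surjective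
      (fun d : Fin n → ZMod p => ∑ i, ((ZMod.cast (d i) : ℤ_[p])) • g i) := by
    intro m
    have hm : m ∈ Submodule.span ℤ_[p] (Set.range g) := hg ▸ Submodule.mem_top
    obtain ⟨c, hc⟩ := (Submodule.mem_span_range_iff_exists_fun ℤ_[p]).mp hm
    refine ⟨fun i => PadicInt.toZMod (c i), ?_⟩
    have h1 : ∀ i : Fin n, (ZMod.cast (PadicInt.toZMod (c i)) : ℤ_[p]) • g i = c i • g i := by
      intro i
      have hmem := PadicInt.toZMod_spec (c i)
      rw [PadicInt.maximalIdeal_eq_span_p, Ideal.mem_span_singleton] at hmem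
      obtain ⟨e, he⟩ := hmem
      have h2 : c i • g i - (ZMod.cast (PadicInt.toZMod (c i)) : ℤ_[p]) • g i = 0 := by
        rw [← sub_smul, he, mul_comm, mul_smul, hp, smul_zero]
      exact (sub_eq_zero.mp h2).symm
    simpa only [h1] using hc
  exact Finite.of_surjective _ hsurj

theorem residue_step {R S : Type*} [CommRing R] [CommRing S] [IsDomain R] [IsDomain S]
    [IsDedekindDomain R] [IsLocalRing R] [IsLocalRing S] [Algebra R S]
    [NoZeroSMulDivisors R S] [Module.Finite R S] [IsIntegrallyClosed S]
    [Finite (R ⧸ IsLocalRing.maximalIdeal R)]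
    [Finite (S ⧸ Ideal.map (algebraMap R S) (IsLocalRing.maximalIdeal R))]
    (hpB : Ideal.map (algebraMap R S) (IsLocalRing.maximalIdeal R) = IsLocalRing.maximalIdeal S)
    (z : S)
    (hz : ∀ y : S, Algebra.intTrace R S (z * y) ∈ IsLocalRing.maximalIdeal R) :
    z ∈ IsLocalRing.maximalIdeal S := by
  haveI : (Ideal.map (algebraMap R S) (IsLocalRing.maximalIdeal R)).IsMaximal := by
    rw [hpB]; exact IsLocalRing.maximalIdeal.isMaximal S
  letI : Field (R ⧸ IsLocalRing.maximalIdeal R) := Ideal.Quotient.field _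
  letI : Field (S ⧸ Ideal.map (algebraMap R S) (IsLocalRing.maximalIdeal R)) :=
    Ideal.Quotient.field _
  haveI : PerfectField (R ⧸ IsLocalRing.maximalIdeal R) := PerfectField.ofFinite
  haveI : Algebra.IsAlgebraic (R ⧸ IsLocalRing.maximalIdeal R)
      (S ⧸ Ideal.map (algebraMap R S) (IsLocalRing.maximalIdeal R)) :=
    Algebra.IsAlgebraic.of_finite _ _
  have hnd := traceForm_nondegenerate (R ⧸ IsLocalRing.maximalIdeal R)
      (S ⧸ Ideal.map (algebraMap R S) (IsLocalRing.maximalIdeal R))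
  have hz0 : Ideal.Quotient.mk (Ideal.map (algebraMap R S) (IsLocalRing.maximalIdeal R)) z
      = 0 := by
    refine hnd.1 _ fun yq => ?_
    obtain ⟨y, rfl⟩ := Ideal.Quotient.mk_surjective yq
    rw [Algebra.traceForm_apply, ← map_mul, Algebra.trace_quotient_eq_of_isDedekindDomain,
      Ideal.Quotient.eq_zero_iff_mem]
    exact hz y
  rw [Ideal.Quotient.eq_zero_iff_mem, hpB] at hz0
  exact hz0

end Helpers

set_option maxHeartbeats 3200000 in
set_option synthInstance.maxHeartbeats 800000 in
/-- For `L/F` a finite unramified extension of finite extensions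
of `ℚ_p` and every `c ∈ L^×`, the dual lattice of `O_L` with respect to the
scaled trace pairing `(x, y) ↦ Tr_{L/F}(c·x·y)` is exactly `c⁻¹·O_L`:
`{x ∈ L : Tr_{L/F}(c·x·y) ∈ O_F for all y ∈ O_L} = c⁻¹·O_L`. -/
theorem statement12 (p : ℕ) [Fact p.Prime]
    (F : Type*) [Field F] [Algebra ℚ_[p] F] [Algebra ℤ_[p] F]
    [IsScalarTower ℤ_[p] ℚ_[p] F] [FiniteDimensional ℚ_[p] F]
    (L : Type*) [Field L] [Algebra ℚ_[p] L] [Algebra ℤ_[p] L]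
    [IsScalarTower ℤ_[p] ℚ_[p] L]
    [Algebra F L] [IsScalarTower ℚ_[p] F L] [FiniteDimensional F L]
    (O_F : Subring F) (O_L : Subring L)
    (hOF : ∀ x : F, x ∈ O_F ↔ IsIntegral ℤ_[p] x)
    (hOL : ∀ x : L, x ∈ O_L ↔ IsIntegral ℤ_[p] x)
    (hur : ∃ ϖ : F, IsUniformizer O_F ϖ ∧ IsUniformizer O_L (algebraMap F L ϖ))
    (c : L) (hc : c ≠ 0) :
    ∀ x : L,
      (∀ y ∈ O_L, Algebra.trace F L (c * x * y) ∈ O_F)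
        ↔ ∃ z ∈ O_L, x = c⁻¹ * z := by
  classical
  obtain ⟨ϖ, hϖF, hϖL⟩ := hur
  haveI : IsScalarTower ℤ_[p] F L := IsScalarTower.of_algebraMap_eq fun x => by
    rw [IsScalarTower.algebraMap_apply ℤ_[p] ℚ_[p] L, IsScalarTower.algebraMap_apply ℚ_[p] F L,
      IsScalarTower.algebraMap_apply ℤ_[p] ℚ_[p] F]
  haveI : CharZero F := charZero_of_injective_algebraMap (algebraMap ℚ_[p] F).injective
  haveI : FiniteDimensional ℚ_[p] L := Module.Finite.trans F L
  haveI : Algebra.IsSeparable ℚ_[p] F := inferInstance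
  haveI : Algebra.IsSeparable F L := inferInstance
  set A : Subalgebra ℤ_[p] F := integralClosure ℤ_[p] F with hAdef
  have hmemA : ∀ x : F, x ∈ A ↔ IsIntegral ℤ_[p] x := fun x => Iff.rfl
  obtain rfl : O_F = A.toSubring := by
    ext x
    rw [hOF x, Subalgebra.mem_toSubring, hmemA x]
  haveI : IsScalarTower ↥A F L := IsScalarTower.of_algebraMap_eq'
    (rfl : algebraMap ↥A L = (algebraMap F L).comp (algebraMap ↥A F))
  haveI : IsScalarTower ℤ_[p] ↥A L := IsScalarTower.of_algebraMap_eq'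
    (show algebraMap ℤ_[p] L = (algebraMap ↥A L).comp (algebraMap ℤ_[p] ↥A) by
      rw [IsScalarTower.algebraMap_eq ℤ_[p] F L, IsScalarTower.algebraMap_eq ℤ_[p] ↥A F,
        ← RingHom.comp_assoc]
      rfl)
  have hinjAF : Function.Injective (algebraMap ↥A F) := Subtype.val_injective
  have hinjAL : Function.Injective (algebraMap ↥A L) := by
    rw [IsScalarTower.algebraMap_eq ↥A F L]
    exact (algebraMap F L).injective.comp hinjAF
  haveI : Algebra.IsIntegral ℤ_[p] ↥A :=
    ⟨fun x => (isIntegral_algebraMap_iff hinjAF).mp x.2⟩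
  set Bs : Subalgebra ↥A L := integralClosure ↥A L with hBdef
  have hmemB : ∀ x : L, x ∈ Bs ↔ IsIntegral ℤ_[p] x := fun x =>
    ⟨fun h => isIntegral_trans _ h, fun h => IsIntegral.tower_top h⟩
  obtain rfl : O_L = Bs.toSubring := by
    ext x
    rw [hOL x, Subalgebra.mem_toSubring, hmemB x]
  -- uniformizers as elements
  have hπAmem : ϖ ∈ A := Subalgebra.mem_toSubring.mp hϖF.1
  set πA : ↥A := ⟨ϖ, hπAmem⟩ with hπAdef
  have hπA0 : πA ≠ 0 := fun h => hϖF.2.1 (by simpa [hπAdef] using congrArg Subtype.val h)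
  have hπAu : ¬ IsUnit πA := fun h =>
    hϖF.2.2.1 (Subalgebra.mem_toSubring.mpr ((Subalgebra.isUnit_iff_field πA).mp h).2)
  have hdvdA : ∀ x : ↥A, ¬ IsUnit x → πA ∣ x := by
    intro x hx
    rw [Subalgebra.isUnit_iff_field, not_and_or, not_ne_iff] at hx
    have hx' : (x : F) = 0 ∨ ((x : F))⁻¹ ∉ A.toSubring := by
      simpa [Subalgebra.mem_toSubring] using hx
    have hq := hϖF.2.2.2 (x : F) (Subalgebra.mem_toSubring.mpr x.2) hx'
    refine ⟨⟨(x : F) / ϖ, Subalgebra.mem_toSubring.mp hq⟩, Subtype.ext ?_⟩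
    show (x : F) = ϖ * ((x : F) / ϖ)
    rw [mul_comm]
    exact (div_mul_cancel₀ _ hϖF.2.1).symm
  have hπBmem : algebraMap F L ϖ ∈ Bs := Subalgebra.mem_toSubring.mp hϖL.1
  set πB : ↥Bs := ⟨algebraMap F L ϖ, hπBmem⟩ with hπBdef
  have hϖL0 : algebraMap F L ϖ ≠ 0 := fun h =>
    hϖF.2.1 ((algebraMap F L).injective (by rw [h, map_zero]))
  have hπBu : ¬ IsUnit πB := fun h =>
    hϖL.2.2.1 (Subalgebra.mem_toSubring.mpr ((Subalgebra.isUnit_iff_field πB).mp h).2)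
  have hdvdB : ∀ x : ↥Bs, ¬ IsUnit x → πB ∣ x := by
    intro x hx
    rw [Subalgebra.isUnit_iff_field, not_and_or, not_ne_iff] at hx
    have hx' : (x : L) = 0 ∨ ((x : L))⁻¹ ∉ Bs.toSubring := by
      simpa [Subalgebra.mem_toSubring] using hx
    have hq := hϖL.2.2.2 (x : L) (Subalgebra.mem_toSubring.mpr x.2) hx'
    refine ⟨⟨(x : L) / algebraMap F L ϖ, Subalgebra.mem_toSubring.mp hq⟩, Subtype.ext ?_⟩
    show (x : L) = algebraMap F L ϖ * ((x : L) / algebraMap F L ϖ)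
    rw [mul_comm]
    exact (div_mul_cancel₀ _ hϖL0).symm
  haveI : Nontrivial ↥A :=
    nontrivial_of_ne 0 1 fun h => zero_ne_one (α := F) (by simpa using congrArg Subtype.val h)
  haveI : Nontrivial ↥Bs :=
    nontrivial_of_ne 0 1 fun h => zero_ne_one (α := L) (by simpa using congrArg Subtype.val h)
  haveI : IsDomain ↥A := Function.Injective.isDomain _ hinjAF
  have hinjBL : Function.Injective (algebraMap ↥Bs L) := Subtype.val_injective
  haveI : IsDomain ↥Bs := Function.Injective.isDomain _ hinjBL
  haveI : IsLocalRing ↥A := IsLocalRing.of_unif hπAu hdvdA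
  haveI : IsLocalRing ↥Bs := IsLocalRing.of_unif hπBu hdvdB
  have hmaxA : IsLocalRing.maximalIdeal ↥A = Ideal.span {πA} :=
    maximalIdeal_eq_span_of_unif hπAu hdvdA
  have hmaxB : IsLocalRing.maximalIdeal ↥Bs = Ideal.span {πB} :=
    maximalIdeal_eq_span_of_unif hπBu hdvdB
  -- instance stack
  haveI : IsFractionRing ↥A F :=
    IsIntegralClosure.isFractionRing_of_finite_extension ℤ_[p] ℚ_[p] F ↥A
  haveI : IsDedekindDomain ↥A := integralClosure.isDedekindDomain ℤ_[p] ℚ_[p] (L := F)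
  haveI : IsDedekindDomain ↥Bs := IsIntegralClosure.isDedekindDomain ↥A F L ↥Bs
  haveI : Module.Finite ↥A ↥Bs := IsIntegralClosure.finite ↥A F L ↥Bs
  haveI : Module.Finite ℤ_[p] ↥A := IsIntegralClosure.finite ℤ_[p] ℚ_[p] F ↥A
  have hinjAB : Function.Injective (algebraMap ↥A ↥Bs) := fun a b h =>
    hinjAL (congrArg Subtype.val h)
  haveI : NoZeroSMulDivisors ↥A ↥Bs := by
    refine ⟨fun {a b} h => ?_⟩
    rw [Algebra.smul_def] at h
    rcases mul_eq_zero.mp h with h | h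
    · exact Or.inl (hinjAB (by rw [h, map_zero]))
    · exact Or.inr h
  have hnfA : ¬ IsField ↥A := by
    intro hf
    obtain ⟨b, hb⟩ := hf.mul_inv_cancel hπA0
    exact hπAu (IsUnit.of_mul_eq_one _ hb)
  haveI : IsDiscreteValuationRing ↥A := by
    have h04 := (IsDiscreteValuationRing.TFAE ↥A hnfA).out 0 4
    exact h04.mpr ⟨⟨πA, hmaxA⟩⟩
  have hirrA : Irreducible πA :=
    IsDiscreteValuationRing.irreducible_of_span_eq_maximalIdeal πA hπA0 hmaxA
  -- p is not a unit in A
  have hpunit : ¬ IsUnit (((p : ℕ) : ℤ_[p])) := by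
    rw [PadicInt.isUnit_iff]
    intro h1
    have hp2 : (1 : ℝ) < (p : ℝ) := by
      exact_mod_cast (Fact.out : p.Prime).one_lt
    rw [PadicInt.norm_p] at h1
    have : (p : ℝ) = 1 := by
      field_simp at h1
      linarith [h1]
    linarith
  have hpA : ¬ IsUnit ((p : ℕ) : ↥A) := by
    rw [Subalgebra.isUnit_iff_field]
    rintro ⟨-, hinv⟩
    have h1 : ((((p : ℕ) : ↥A)) : F) = algebraMap ℚ_[p] F ((p : ℕ) : ℚ_[p]) := by
      push_cast
      simp
    rw [h1, ← map_inv₀] at hinv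
    have h2 : IsIntegral ℤ_[p] (((p : ℕ) : ℚ_[p])⁻¹) :=
      (isIntegral_algebraMap_iff (algebraMap ℚ_[p] F).injective).mp ((hmemA _).mp hinv)
    obtain ⟨y, hy⟩ := IsIntegrallyClosed.isIntegral_iff.mp h2
    have hp0 : ((p : ℕ) : ℚ_[p]) ≠ 0 := by
      exact_mod_cast (Fact.out : p.Prime).ne_zero
    apply hpunit
    refine IsUnit.of_mul_eq_one y ?_
    apply IsFractionRing.injective ℤ_[p] ℚ_[p]
    rw [map_mul, hy, map_one, map_natCast]
    field_simp
  have hpBu : ¬ IsUnit ((p : ℕ) : ↥Bs) := by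
    rw [Subalgebra.isUnit_iff_field]
    rintro ⟨-, hinv⟩
    have h1 : ((((p : ℕ) : ↥Bs)) : L) = algebraMap ℚ_[p] L ((p : ℕ) : ℚ_[p]) := by
      push_cast
      simp
    rw [h1, ← map_inv₀] at hinv
    have h2 : IsIntegral ℤ_[p] (((p : ℕ) : ℚ_[p])⁻¹) :=
      (isIntegral_algebraMap_iff (algebraMap ℚ_[p] L).injective).mp ((hmemB _).mp hinv)
    obtain ⟨y, hy⟩ := IsIntegrallyClosed.isIntegral_iff.mp h2
    have hp0 : ((p : ℕ) : ℚ_[p]) ≠ 0 := by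
      exact_mod_cast (Fact.out : p.Prime).ne_zero
    apply hpunit
    refine IsUnit.of_mul_eq_one y ?_
    apply IsFractionRing.injective ℤ_[p] ℚ_[p]
    rw [map_mul, hy, map_one, map_natCast]
    field_simp
  -- trace bridge
  have htr : ∀ b : ↥Bs, algebraMap ↥A F (Algebra.intTrace ↥A ↥Bs b) =
      Algebra.trace F L (b : L) := by
    intro b
    have h := Algebra.algebraMap_intTrace (A := ↥A) (B := ↥Bs) (K := F) (L := L) b
    simpa using h
  -- the key descent step
  haveI : (IsLocalRing.maximalIdeal ↥A).IsMaximal := IsLocalRing.maximalIdeal.isMaximal ↥A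
  have hπABmap : algebraMap ↥A ↥Bs πA = πB := Subtype.ext (by
    show algebraMap ↥A L πA = algebraMap F L ϖ
    rw [IsScalarTower.algebraMap_apply ↥A F L]
    rfl)
  have hpB : Ideal.map (algebraMap ↥A ↥Bs) (IsLocalRing.maximalIdeal ↥A) =
      IsLocalRing.maximalIdeal ↥Bs := by
    rw [hmaxA, Ideal.map_span, Set.image_singleton, hπABmap, hmaxB]
  haveI : Module.Finite ℤ_[p] ↥Bs := Module.Finite.trans ↥A ↥Bs
  haveI : Finite (↥Bs ⧸ Ideal.map (algebraMap ↥A ↥Bs) (IsLocalRing.maximalIdeal ↥A)) := by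
    haveI : Module.Finite ℤ_[p]
        (↥Bs ⧸ Ideal.map (algebraMap ↥A ↥Bs) (IsLocalRing.maximalIdeal ↥A)) :=
      Module.Finite.of_surjective (Ideal.Quotient.mkₐ ℤ_[p] _).toLinearMap
        (Ideal.Quotient.mkₐ_surjective ℤ_[p] _)
    refine finite_of_fg_p_torsion p _ ?_
    intro m
    obtain ⟨a, rfl⟩ := Ideal.Quotient.mk_surjective m
    have h1 : ((p : ℕ) : ↥Bs) ∈
        Ideal.map (algebraMap ↥A ↥Bs) (IsLocalRing.maximalIdeal ↥A) := by
      rw [hpB, IsLocalRing.mem_maximalIdeal, mem_nonunits_iff]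
      exact hpBu
    have h2 : ((p : ℕ) : ℤ_[p]) •
          (Ideal.Quotient.mk (Ideal.map (algebraMap ↥A ↥Bs) (IsLocalRing.maximalIdeal ↥A)) a) =
        Ideal.Quotient.mk _ (((p : ℕ) : ℤ_[p]) • a) :=
      ((Ideal.Quotient.mkₐ ℤ_[p] _).toLinearMap.map_smul ((p : ℕ) : ℤ_[p]) a).symm
    rw [h2, Ideal.Quotient.eq_zero_iff_mem, Algebra.smul_def, map_natCast]
    exact Ideal.mul_mem_right a _ h1
  haveI : Finite (↥A ⧸ IsLocalRing.maximalIdeal ↥A) := by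
    haveI : Module.Finite ℤ_[p] (↥A ⧸ IsLocalRing.maximalIdeal ↥A) :=
      Module.Finite.of_surjective (Ideal.Quotient.mkₐ ℤ_[p] _).toLinearMap
        (Ideal.Quotient.mkₐ_surjective ℤ_[p] _)
    refine finite_of_fg_p_torsion p _ ?_
    intro m
    obtain ⟨a, rfl⟩ := Ideal.Quotient.mk_surjective m
    have h1 : ((p : ℕ) : ↥A) ∈ IsLocalRing.maximalIdeal ↥A := by
      rw [IsLocalRing.mem_maximalIdeal, mem_nonunits_iff]
      exact hpA
    have h2 : ((p : ℕ) : ℤ_[p]) •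
          (Ideal.Quotient.mk (IsLocalRing.maximalIdeal ↥A) a) =
        Ideal.Quotient.mk (IsLocalRing.maximalIdeal ↥A) (((p : ℕ) : ℤ_[p]) • a) :=
      ((Ideal.Quotient.mkₐ ℤ_[p] (IsLocalRing.maximalIdeal ↥A)).toLinearMap.map_smul
        ((p : ℕ) : ℤ_[p]) a).symm
    rw [h2, Ideal.Quotient.eq_zero_iff_mem, Algebra.smul_def, map_natCast]
    exact Ideal.mul_mem_right a _ h1
  have step : ∀ t : L, (∀ y ∈ Bs, Algebra.trace F L (t * y) ∈ A) →
      algebraMap F L ϖ * t ∈ Bs → t ∈ Bs := by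
    intro t ht htm
    set z : ↥Bs := ⟨algebraMap F L ϖ * t, htm⟩ with hzdef
    have hzmem : ∀ y : ↥Bs, Algebra.intTrace ↥A ↥Bs (z * y) ∈ IsLocalRing.maximalIdeal ↥A := by
      intro y
      obtain ⟨s, hs⟩ : ∃ s : ↥A, algebraMap ↥A F s = Algebra.trace F L (t * (y : L)) :=
        ⟨⟨_, ht (y : L) y.2⟩, rfl⟩
      have h1 : algebraMap ↥A F (Algebra.intTrace ↥A ↥Bs (z * y)) =
          algebraMap ↥A F (πA * s) := by
        rw [htr, map_mul, hs]
        have hcoe : ((z * y : ↥Bs) : L) = algebraMap F L ϖ * (t * (y : L)) := by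
          push_cast [hzdef]
          ring
        rw [hcoe, ← Algebra.smul_def, map_smul, smul_eq_mul]
        rfl
      have h2 : Algebra.intTrace ↥A ↥Bs (z * y) = πA * s := hinjAF h1
      rw [h2, hmaxA]
      exact Ideal.mem_span_singleton.mpr (Dvd.intro s rfl)
    have hzmax : z ∈ IsLocalRing.maximalIdeal ↥Bs := residue_step hpB z hzmem
    rw [hmaxB, Ideal.mem_span_singleton] at hzmax
    obtain ⟨b, hb⟩ := hzmax
    have hb' : algebraMap F L ϖ * t = algebraMap F L ϖ * (b : L) := by
      have h := congrArg Subtype.val hb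
      push_cast [hzdef, hπBdef] at h
      exact h
    have ht' : t = (b : L) := mul_left_cancel₀ hϖL0 hb'
    rw [ht']
    exact b.2
  -- the main hard direction
  have main : ∀ w : L, (∀ y ∈ Bs, Algebra.trace F L (w * y) ∈ A) → w ∈ Bs := by
    intro w hw
    obtain ⟨a, ha0, hint⟩ := IsAlgebraic.exists_integral_multiple
        ((IsFractionRing.isAlgebraic_iff ↥A F L).mpr (IsAlgebraic.of_finite F w))
    obtain ⟨xc, hax⟩ : ∃ xc : ↥Bs, algebraMap ↥A L a * w = (xc : L) :=
      ⟨⟨a • w, hint⟩, (Algebra.smul_def a w).symm⟩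
    obtain ⟨n, u, hu⟩ := IsDiscreteValuationRing.eq_unit_mul_pow_irreducible ha0 hirrA
    have hn : (algebraMap F L ϖ) ^ n * w ∈ Bs := by
      rw [hu, map_mul, mul_assoc] at hax
      have h1 : algebraMap ↥A L (πA ^ n) * w = algebraMap ↥A L ↑(u⁻¹) * (xc : L) := by
        rw [← hax, ← mul_assoc, ← map_mul]
        norm_num
      have h2 : (algebraMap F L ϖ) ^ n * w = algebraMap ↥A L (πA ^ n) * w := by
        rw [map_pow]
        rfl
      rw [h2, h1]
      exact Bs.mul_mem (Bs.algebraMap_mem ↑(u⁻¹)) xc.2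
    have key : ∀ m : ℕ, (algebraMap F L ϖ) ^ m * w ∈ Bs → w ∈ Bs := by
      intro m
      induction m with
      | zero => intro h; simpa using h
      | succ k ih =>
        intro h
        apply ih
        apply step ((algebraMap F L ϖ) ^ k * w)
        · intro y hy
          have hcalc : (algebraMap F L ϖ) ^ k * w * y = algebraMap F L (ϖ ^ k) * (w * y) := by
            rw [map_pow]
            ring
          rw [hcalc, ← Algebra.smul_def, map_smul, smul_eq_mul]
          exact A.mul_mem (pow_mem hπAmem k) (hw y hy)
        · have heq : algebraMap F L ϖ * ((algebraMap F L ϖ) ^ k * w) =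
              (algebraMap F L ϖ) ^ (k + 1) * w := by
            ring
          rw [heq]
          exact h
    exact key n hn
  -- wrap up
  intro x
  simp only [Subalgebra.mem_toSubring]
  constructor
  · intro h
    exact ⟨c * x, main (c * x) h, (inv_mul_cancel_left₀ hc x).symm⟩
  · rintro ⟨z, hz, rfl⟩
    intro y hy
    have hcz : c * (c⁻¹ * z) = z := mul_inv_cancel_left₀ hc z
    rw [hcz]
    have hint : IsIntegral ℤ_[p] (z * y) := (hmemB _).mp (Bs.mul_mem hz hy)
    exact (hmemA _).mpr (Algebra.isIntegral_trace hint)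
end

section
/- Let 𝓛 be a lattice in W whose dual lattice 𝓛̃ satisfies ϖ·𝓛̃ ⊆ 𝓛 ⊆ 𝓛̃. Then: (a) reducing ω modulo the maximal ideal induces a well-defined alternating k-bilinear form ω̄ on the k-vector space 𝓛/ϖ𝓛̃ (given by ω̄(x̄, ȳ) = ω(x,y) mod ϖ), and ω̄ is nondegenerate; (b) the scaled form ϖ·ω induces a well-defined alternating k-bilinear form on the k-vector space 𝓛̃/𝓛 (given by (x̄, ȳ) ↦ ϖ·ω(x,y) mod ϖ), and this form is nondegenerate. Thus both quotients are symplectic vector spaces over the residue field k. -/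
/-- The dual lattice of a lattice `L` (given as a set) in a space `W` with
bilinear form `ω`, with respect to the ring of integers `O` (sitting in `F` via
`algebraMap O F`): all `x` pairing `L` into `O`. -/
def dualLattice (O : Type*) {F W : Type*} [CommRing O] [Field F] [Algebra O F]
    [AddCommGroup W] [Module F W]
    (ω : W →ₗ[F] W →ₗ[F] F) (L : Set W) : Set W :=
  {x : W | ∀ ℓ ∈ L, ω x ℓ ∈ (algebraMap O F).range}

/-- Let `F` be a finite extension of `ℚ_p` with ring of integers
`O` (a DVR with uniformizer `ϖ`) and `(W, ω)` a symplectic `F`-space.  Let `𝓛`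
be a lattice with `ϖ·𝓛̃ ⊆ 𝓛 ⊆ 𝓛̃` where `𝓛̃` is its dual lattice.  Then:
(a) `ω mod ϖ` induces a well-defined alternating nondegenerate form on
`𝓛/ϖ𝓛̃` (expressed here via congruences: values of `ω` on `𝓛` are integral,
depend `mod ϖ` only on the classes `mod ϖ𝓛̃`, vanish on the diagonal `mod ϖ`,
and an element of `𝓛` pairing `𝓛` into `ϖO` lies in `ϖ𝓛̃`); and
(b) `ϖ·ω mod ϖ` induces a well-defined alternating nondegenerate form on
`𝓛̃/𝓛` (similarly expressed via congruences).  Thus both quotients are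
symplectic vector spaces over the residue field `k = O/(ϖ)`. -/
theorem statement14 (p : ℕ) [Fact p.Prime]
    (O : Type*) [CommRing O] [IsDomain O] [IsDiscreteValuationRing O]
    (F : Type*) [Field F] [Algebra O F] [IsFractionRing O F]
    [Algebra ℚ_[p] F] [FiniteDimensional ℚ_[p] F]
    (ϖ : O) (hϖ : Irreducible ϖ)
    (W : Type*) [AddCommGroup W] [Module O W] [Module F W] [IsScalarTower O F W]
    [FiniteDimensional F W]
    (ω : W →ₗ[F] W →ₗ[F] F)
    (halt : ∀ x : W, ω x x = 0)
    (hnd : ∀ x : W, (∀ y : W, ω x y = 0) → x = 0)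
    (𝓛 : Submodule O W) (hfg : 𝓛.FG)
    (hspan : Submodule.span F (𝓛 : Set W) = ⊤)
    (hsub1 : ∀ x ∈ dualLattice O ω (𝓛 : Set W), ϖ • x ∈ 𝓛)
    (hsub2 : (𝓛 : Set W) ⊆ dualLattice O ω (𝓛 : Set W)) :
    -- (a) the form induced by ω on 𝓛 / ϖ·𝓛̃ :
    ((∀ x ∈ 𝓛, ∀ y ∈ 𝓛, ω x y ∈ (algebraMap O F).range)
      ∧ (∀ x ∈ 𝓛, ∀ x' ∈ 𝓛, ∀ y ∈ 𝓛, ∀ y' ∈ 𝓛,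
          (∃ z ∈ dualLattice O ω (𝓛 : Set W), x - x' = ϖ • z) →
          (∃ z ∈ dualLattice O ω (𝓛 : Set W), y - y' = ϖ • z) →
          ∃ a : O, ω x y - ω x' y' = algebraMap O F (ϖ * a))
      ∧ (∀ x ∈ 𝓛, ∃ a : O, ω x x = algebraMap O F (ϖ * a))
      ∧ (∀ x ∈ 𝓛, (∀ y ∈ 𝓛, ∃ a : O, ω x y = algebraMap O F (ϖ * a)) →
          ∃ z ∈ dualLattice O ω (𝓛 : Set W), x = ϖ • z))
    ∧ -- (b) the form induced by ϖ·ω on 𝓛̃ / 𝓛 :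
    ((∀ x ∈ dualLattice O ω (𝓛 : Set W), ∀ y ∈ dualLattice O ω (𝓛 : Set W),
          algebraMap O F ϖ * ω x y ∈ (algebraMap O F).range)
      ∧ (∀ x ∈ dualLattice O ω (𝓛 : Set W), ∀ x' ∈ dualLattice O ω (𝓛 : Set W),
          ∀ y ∈ dualLattice O ω (𝓛 : Set W), ∀ y' ∈ dualLattice O ω (𝓛 : Set W),
          x - x' ∈ 𝓛 → y - y' ∈ 𝓛 →
          ∃ a : O, algebraMap O F ϖ * ω x y - algebraMap O F ϖ * ω x' y'
            = algebraMap O F (ϖ * a))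
      ∧ (∀ x ∈ dualLattice O ω (𝓛 : Set W), algebraMap O F ϖ * ω x x = 0)
      ∧ (∀ x ∈ dualLattice O ω (𝓛 : Set W),
          (∀ y ∈ dualLattice O ω (𝓛 : Set W),
            ∃ a : O, algebraMap O F ϖ * ω x y = algebraMap O F (ϖ * a)) →
          x ∈ 𝓛)) := by
    classical
  have hinj : Function.Injective (algebraMap O F) := IsFractionRing.injective O F
  set π : F := algebraMap O F ϖ with hπdef
  have hπ : π ≠ 0 := fun h => hϖ.ne_zero (hinj (h.trans (map_zero _).symm))
  have hskew : ∀ x y : W, ω y x = -ω x y := by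
    intro x y
    have h := halt (x + y)
    simp only [map_add, LinearMap.add_apply, halt x, halt y, zero_add, add_zero] at h
    linear_combination h
  have hmem' : ∀ x y : W, x ∈ 𝓛 → y ∈ dualLattice O ω (𝓛 : Set W) →
      ω x y ∈ (algebraMap O F).range := by
    intro x y hx hy
    have h : ω x y = -(ω y x) := by rw [hskew x y]; ring
    rw [h]
    exact neg_mem (hy x hx)
  -- biduality: anything pairing the dual lattice into O lies in 𝓛
  have key : ∀ x : W, (∀ y ∈ dualLattice O ω (𝓛 : Set W),
      ω x y ∈ (algebraMap O F).range) → x ∈ 𝓛 := by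
    intro x hx
    haveI : NoZeroSMulDivisors O W := by
      constructor
      intro a w h
      rcases eq_or_ne a 0 with ha | ha
      · exact Or.inl ha
      · right
        have h2 : (algebraMap O F a) • w = 0 := by rw [algebraMap_smul]; exact h
        have ha' : algebraMap O F a ≠ 0 := fun hh => ha (hinj (hh.trans (map_zero _).symm))
        exact (smul_eq_zero.mp h2).resolve_left ha'
    haveI : Module.Finite O 𝓛 := Module.Finite.iff_fg.mpr hfg
    obtain ⟨n, b⟩ := Module.basisOfFiniteTypeTorsionFree' (R := O) (M := 𝓛)
    set v : Fin n → W := fun i => (b i : W) with hv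
    have hliO : LinearIndependent O v := b.linearIndependent.map' 𝓛.subtype 𝓛.ker_subtype
    have hliF : LinearIndependent F v := (LinearIndependent.iff_fractionRing O F).mp hliO
    have hspanO : Submodule.span O (Set.range v) = 𝓛 := by
      have h := congrArg (Submodule.map 𝓛.subtype) b.span_eq
      rwa [Submodule.map_span, Submodule.map_top, Submodule.range_subtype,
        ← Set.range_comp] at h
    have hsubset : (𝓛 : Set W) ⊆ (Submodule.span F (Set.range v) : Set W) := by
      have h1 : Submodule.span O (Set.range v) ≤
          (Submodule.span F (Set.range v)).restrictScalars O :=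
        Submodule.span_le.mpr Submodule.subset_span
      rw [← hspanO]
      exact fun z hz => h1 hz
    have hspanF : Submodule.span F (Set.range v) = ⊤ := by
      rw [← top_le_iff, ← hspan]
      exact Submodule.span_le.mpr hsubset
    let bF : Module.Basis (Fin n) F W := Module.Basis.mk hliF hspanF.ge
    have hbF : Set.range ⇑bF = Set.range v := by rw [Module.Basis.coe_mk]
    have hflipdual : ∀ N : Submodule O W,
        LinearMap.BilinForm.dualSubmodule ω N = LinearMap.BilinForm.dualSubmodule ω.flip N := by
      intro N
      ext z
      simp only [LinearMap.BilinForm.mem_dualSubmodule, LinearMap.flip_apply]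
      constructor
      · intro h y hy
        have h2 : ω y z = -(ω z y) := hskew z y
        rw [h2]
        exact neg_mem (h y hy)
      · intro h y hy
        have h2 : ω z y = -(ω y z) := by rw [hskew z y]; ring
        rw [h2]
        exact neg_mem (h y hy)
    have hdualset : dualLattice O ω (𝓛 : Set W) =
        (LinearMap.BilinForm.dualSubmodule ω 𝓛 : Set W) := by
      ext z
      constructor
      · intro h y hy
        obtain ⟨a, ha⟩ := h y hy
        exact Submodule.mem_one.mpr ⟨a, ha⟩
      · intro h y hy
        obtain ⟨a, ha⟩ := Submodule.mem_one.mp (h y hy)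
        exact ⟨a, ha⟩
    have hndB : LinearMap.BilinForm.Nondegenerate ω :=
      (LinearMap.IsRefl.nondegenerate_iff_separatingLeft
        (fun x y h => by rw [hskew x y, h, neg_zero])).mpr hnd
    have hbid : LinearMap.BilinForm.dualSubmodule ω.flip
        (LinearMap.BilinForm.dualSubmodule ω 𝓛) = 𝓛 := by
      have h := LinearMap.BilinForm.dualSubmodule_flip_dualSubmodule_of_basis (R := O) ω hndB bF
      rwa [hbF, hspanO] at h
    have hx' : x ∈ LinearMap.BilinForm.dualSubmodule ω
        (LinearMap.BilinForm.dualSubmodule ω 𝓛) := by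
      intro y hy
      have hy' : y ∈ dualLattice O ω (𝓛 : Set W) := by rw [hdualset]; exact hy
      obtain ⟨a, ha⟩ := hx y hy'
      exact Submodule.mem_one.mpr ⟨a, ha⟩
    rw [hflipdual] at hx'
    rwa [hbid] at hx'
  refine ⟨⟨?_, ?_, ?_, ?_⟩, ?_, ?_, ?_, ?_⟩
  · -- (a1) integrality
    intro x hx y hy
    exact hsub2 hx y hy
  · -- (a2) well-definedness
    rintro x hx x' hx' y hy y' hy' ⟨z, hz, hxz⟩ ⟨z', hz', hyz⟩
    obtain ⟨a, ha⟩ := hz y hy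
    obtain ⟨b2, hb2⟩ := hmem' x' z' hx' hz'
    refine ⟨a + b2, ?_⟩
    have e1 : ω (x - x') y = π * ω z y := by
      rw [hxz, show (ϖ • z : W) = π • z from (algebraMap_smul F ϖ z).symm]
      simp
    have e2 : ω x' (y - y') = π * ω x' z' := by
      rw [hyz, show (ϖ • z' : W) = π • z' from (algebraMap_smul F ϖ z').symm]
      simp
    have e3 : ω x y - ω x' y' = ω (x - x') y + ω x' (y - y') := by
      simp only [map_sub, LinearMap.sub_apply]
      ring
    rw [e3, e1, e2, map_mul, map_add, ← ha, ← hb2]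
    ring
  · -- (a3) alternating
    intro x _
    exact ⟨0, by simp [halt x]⟩
  · -- (a4) nondegeneracy
    intro x hxL hx
    refine ⟨π⁻¹ • x, ?_, ?_⟩
    · intro ℓ hℓ
      obtain ⟨a, ha⟩ := hx ℓ hℓ
      refine ⟨a, ?_⟩
      have e : ω (π⁻¹ • x) ℓ = π⁻¹ * ω x ℓ := by simp
      rw [e, ha, map_mul]
      field_simp
      rw [hπdef]
    · rw [show (ϖ • (π⁻¹ • x) : W) = π • (π⁻¹ • x) from (algebraMap_smul F ϖ _).symm,
        smul_smul, mul_inv_cancel₀ hπ, one_smul]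
  · -- (b1) integrality
    intro x hx y hy
    have hmx : ϖ • x ∈ 𝓛 := hsub1 x hx
    obtain ⟨a, ha⟩ := hy (ϖ • x) hmx
    refine ⟨-a, ?_⟩
    have e : ω y (ϖ • x) = π * ω y x := by
      rw [show (ϖ • x : W) = π • x from (algebraMap_smul F ϖ x).symm]
      simp
    rw [map_neg, ha, e, hskew x y]
    ring
  · -- (b2) well-definedness
    intro x hx x' hx' y hy y' hy' d1 d2
    obtain ⟨a, ha⟩ := hmem' _ _ d1 hy
    obtain ⟨b2, hb2⟩ := hx' _ d2
    refine ⟨a + b2, ?_⟩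
    rw [map_mul, map_add, ha, hb2]
    simp only [map_sub, LinearMap.sub_apply]
    ring
  · -- (b3) alternating
    intro x _
    rw [halt x, mul_zero]
  · -- (b4) nondegeneracy
    intro x hx h
    apply key x
    intro y hy
    obtain ⟨a, ha⟩ := h y hy
    rw [map_mul] at ha
    exact ⟨a, (mul_left_cancel₀ hπ ha.symm)⟩
end
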